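/- Suppose the feasible set F is nonempty. Then: (a) there exists η ∈ F attaining inf_{π ∈ F} J(π,γ,R)(x), and for every T ≥ 1 there exists η_T ∈ F_T^+ attaining inf_{π ∈ F_T^+} J_T(π,γ,R)(x). Moreover: (b) if F_{T*}^- is nonempty for some T* ≥ 1 (without assuming F nonempty), then F is nonempty and for every T ≥ T* there exists η_T ∈ F_T^- attaining inf_{π ∈ F_T^-} J_T(π,γ,R)(x). -/

import Mathlib

open Finset Filter Matrix

/-- A row-stochastic matrix (decision rule): nonnegative entries, each row sums to 1. -/
def IsStoch (m n : ℕ) (d : Matrix (Fin m) (Fin n) ℝ) : Prop :=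
  (∀ s a, 0 ≤ d s a) ∧ ∀ s, ∑ a, d s a = 1

/-- Valid transition probabilities `p s a s' = p(s'|s,a)`. -/
def IsTransKer (m n : ℕ) (p : Fin m → Fin n → Fin m → ℝ) : Prop :=
  (∀ s a s', 0 ≤ p s a s') ∧ ∀ s a, ∑ s', p s a s' = 1

/-- Max absolute entry norm on vectors. -/
noncomputable def vecNorm {m : ℕ} (v : Fin m → ℝ) : ℝ := ⨆ i, |v i|

/-- Maximum absolute row-sum norm on matrices. -/
noncomputable def rowSumNorm {m n : ℕ} (B : Matrix (Fin m) (Fin n) ℝ) : ℝ :=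
  ⨆ i, ∑ j, |B i j|

/-- Max absolute entry norm on matrices. -/
noncomputable def maxNorm {m n : ℕ} (B : Matrix (Fin m) (Fin n) ℝ) : ℝ :=
  ⨆ i, ⨆ j, |B i j|

/-- `(R_d)_s = ∑_a R(s,a) d(a|s)`. -/
noncomputable def Rvec {m n : ℕ} (R d : Matrix (Fin m) (Fin n) ℝ) : Fin m → ℝ :=
  fun s => ∑ a, R s a * d s a

/-- `(P_d)_{s,s'} = ∑_a p(s'|s,a) d(a|s)`. -/
noncomputable def Pmat {m n : ℕ} (p : Fin m → Fin n → Fin m → ℝ)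
    (d : Matrix (Fin m) (Fin n) ℝ) : Matrix (Fin m) (Fin m) ℝ :=
  fun s s' => ∑ a, p s a s' * d s a

/-- `P_0^π = I`, `P_{t+1}^π = P_t^π ⬝ P_{d_t}`. -/
noncomputable def Ppi {m n : ℕ} (p : Fin m → Fin n → Fin m → ℝ)
    (π : ℕ → Matrix (Fin m) (Fin n) ℝ) : ℕ → Matrix (Fin m) (Fin m) ℝ
  | 0 => 1
  | t + 1 => Ppi p π t * Pmat p (π t)

/-- Finite-horizon standard discounted cost vector `V_T(π,R)`. -/
noncomputable def VT {m n : ℕ} (β : ℝ) (p : Fin m → Fin n → Fin m → ℝ)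
    (π : ℕ → Matrix (Fin m) (Fin n) ℝ) (R : Matrix (Fin m) (Fin n) ℝ) (T : ℕ) :
    Fin m → ℝ :=
  fun x => ∑ t ∈ Finset.range T, β ^ t * (Ppi p π t *ᵥ Rvec R (π t)) x

/-- Infinite-horizon standard discounted cost vector `V(π,R)`. -/
noncomputable def Vinf {m n : ℕ} (β : ℝ) (p : Fin m → Fin n → Fin m → ℝ)
    (π : ℕ → Matrix (Fin m) (Fin n) ℝ) (R : Matrix (Fin m) (Fin n) ℝ) :
    Fin m → ℝ :=
  fun x => ∑' t : ℕ, β ^ t * (Ppi p π t *ᵥ Rvec R (π t)) x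

/-- `Qrev β γ p π R T k = Q_{T-1-k}^{T,π,R}`, defined by the backward recursion. -/
noncomputable def Qrev {m n : ℕ} (β γ : ℝ) (p : Fin m → Fin n → Fin m → ℝ)
    (π : ℕ → Matrix (Fin m) (Fin n) ℝ) (R : Matrix (Fin m) (Fin n) ℝ) (T : ℕ) :
    ℕ → Matrix (Fin m) (Fin n) ℝ
  | 0 => fun s a => Real.exp (γ * β ^ (T - 1) * R s a)
  | k + 1 => fun s a =>
      Real.exp (γ * β ^ (T - 1 - (k + 1)) * R s a) *
        ∑ s', p s a s' * ∑ a', π (T - 1 - k) s' a' * Qrev β γ p π R T k s' a'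

/-- `Q_t^{T,π,R}` for `0 ≤ t ≤ T-1`. -/
noncomputable def Qmat {m n : ℕ} (β γ : ℝ) (p : Fin m → Fin n → Fin m → ℝ)
    (π : ℕ → Matrix (Fin m) (Fin n) ℝ) (R : Matrix (Fin m) (Fin n) ℝ) (T t : ℕ) :
    Matrix (Fin m) (Fin n) ℝ :=
  Qrev β γ p π R T (T - 1 - t)

/-- Finite-horizon risk-sensitive cost vector `J_T(π,γ,R)`. -/
noncomputable def JT {m n : ℕ} (β γ : ℝ) (p : Fin m → Fin n → Fin m → ℝ)
    (π : ℕ → Matrix (Fin m) (Fin n) ℝ) (R : Matrix (Fin m) (Fin n) ℝ) (T : ℕ) :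
    Fin m → ℝ :=
  fun s => ∑ a, π 0 s a * Qmat β γ p π R T 0 s a

/-- Infinite-horizon risk-sensitive cost `J(π,γ,R)(x) = lim_{T→∞} J_T(π,γ,R)(x)`. -/
noncomputable def Jinf {m n : ℕ} (β γ : ℝ) (p : Fin m → Fin n → Fin m → ℝ)
    (π : ℕ → Matrix (Fin m) (Fin n) ℝ) (R : Matrix (Fin m) (Fin n) ℝ) (x : Fin m) : ℝ :=
  limUnder atTop (fun T => JT β γ p π R T x)

/-- The metric `μ(π₁,π₂) = sup_t δ^t ‖d_t − f_t‖_∞` on Markovian randomized policies. -/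
noncomputable def policyDist {m n : ℕ} (δ : ℝ)
    (π₁ π₂ : ℕ → Matrix (Fin m) (Fin n) ℝ) : ℝ :=
  ⨆ t : ℕ, δ ^ t * rowSumNorm (π₁ t - π₂ t)

section Statement19

variable {m n : ℕ}

/-- The feasible set `F` of the infinite-horizon CRSMDP `(P)`. -/
def Feas (m n : ℕ) (p : Fin m → Fin n → Fin m → ℝ) (β γ : ℝ) (x : Fin m)
    {M Mh Mb Mc : ℕ}
    (CC : Fin M → Matrix (Fin m) (Fin n) ℝ) (Ch : Fin Mh → Matrix (Fin m) (Fin n) ℝ)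
    (Cb : Fin Mb → Matrix (Fin m) (Fin n) ℝ) (Cc : Fin Mc → Matrix (Fin m) (Fin n) ℝ)
    (b : Fin M → ℝ) (bh : Fin Mh → ℝ) (bb : Fin Mb → ℝ) (bc : Fin Mc → ℝ)
    (Tb : Fin Mb → ℕ) (Tc : Fin Mc → ℕ) : Set (ℕ → Matrix (Fin m) (Fin n) ℝ) :=
  {π | (∀ t, IsStoch m n (π t)) ∧
       (∀ i, Vinf β p π (CC i) x ≤ b i) ∧
       (∀ j, Jinf β γ p π (Ch j) x ≤ bh j) ∧
       (∀ k, VT β p π (Cb k) (Tb k) x ≤ bb k) ∧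
       (∀ l, JT β γ p π (Cc l) (Tc l) x ≤ bc l)}

/-- The feasible set `F_T^-` of the truncated problem `(P_T^-)`, with `K = C/(1−β)` and
`K_T = exp(|γ|Kβ^T)`. -/
def FeasMinus (m n : ℕ) (p : Fin m → Fin n → Fin m → ℝ) (β γ C : ℝ) (x : Fin m)
    {M Mh Mb Mc : ℕ}
    (CC : Fin M → Matrix (Fin m) (Fin n) ℝ) (Ch : Fin Mh → Matrix (Fin m) (Fin n) ℝ)
    (Cb : Fin Mb → Matrix (Fin m) (Fin n) ℝ) (Cc : Fin Mc → Matrix (Fin m) (Fin n) ℝ)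
    (b : Fin M → ℝ) (bh : Fin Mh → ℝ) (bb : Fin Mb → ℝ) (bc : Fin Mc → ℝ)
    (Tb : Fin Mb → ℕ) (Tc : Fin Mc → ℕ) (T : ℕ) : Set (ℕ → Matrix (Fin m) (Fin n) ℝ) :=
  {π | (∀ t, IsStoch m n (π t)) ∧
       (∀ i, VT β p π (CC i) T x ≤ b i - C / (1 - β) * β ^ T) ∧
       (∀ j, JT β γ p π (Ch j) T x ≤ bh j / Real.exp (|γ| * (C / (1 - β)) * β ^ T)) ∧
       (∀ k, VT β p π (Cb k) (Tb k) x ≤ bb k) ∧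
       (∀ l, JT β γ p π (Cc l) (Tc l) x ≤ bc l)}

/-- The feasible set `F_T^+` of the truncated problem `(P_T^+)`. -/
def FeasPlus (m n : ℕ) (p : Fin m → Fin n → Fin m → ℝ) (β γ C : ℝ) (x : Fin m)
    {M Mh Mb Mc : ℕ}
    (CC : Fin M → Matrix (Fin m) (Fin n) ℝ) (Ch : Fin Mh → Matrix (Fin m) (Fin n) ℝ)
    (Cb : Fin Mb → Matrix (Fin m) (Fin n) ℝ) (Cc : Fin Mc → Matrix (Fin m) (Fin n) ℝ)
    (b : Fin M → ℝ) (bh : Fin Mh → ℝ) (bb : Fin Mb → ℝ) (bc : Fin Mc → ℝ)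
    (Tb : Fin Mb → ℕ) (Tc : Fin Mc → ℕ) (T : ℕ) : Set (ℕ → Matrix (Fin m) (Fin n) ℝ) :=
  {π | (∀ t, IsStoch m n (π t)) ∧
       (∀ i, VT β p π (CC i) T x ≤ b i + C / (1 - β) * β ^ T) ∧
       (∀ j, JT β γ p π (Ch j) T x ≤ bh j * Real.exp (|γ| * (C / (1 - β)) * β ^ T)) ∧
       (∀ k, VT β p π (Cb k) (Tb k) x ≤ bb k) ∧
       (∀ l, JT β γ p π (Cc l) (Tc l) x ≤ bc l)}

namespace Stmt19Aux

open Finset Filter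

variable {m n : ℕ}

/-- The set of all policies (sequences of stochastic matrices). -/
def Pol (m n : ℕ) : Set (ℕ → Matrix (Fin m) (Fin n) ℝ) := {π | ∀ t, IsStoch m n (π t)}

lemma isClosed_stoch : IsClosed {d : Matrix (Fin m) (Fin n) ℝ | IsStoch m n d} := by
  have h : {d : Matrix (Fin m) (Fin n) ℝ | IsStoch m n d}
      = (⋂ s, ⋂ a, {d : Matrix (Fin m) (Fin n) ℝ | 0 ≤ d s a}) ∩
        (⋂ s, {d : Matrix (Fin m) (Fin n) ℝ | ∑ a, d s a = 1}) := by
    ext d; simp [IsStoch, Set.mem_iInter]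
  rw [h]
  apply IsClosed.inter
  · exact isClosed_iInter fun s => isClosed_iInter fun a =>
      isClosed_le continuous_const ((continuous_apply a).comp (continuous_apply s))
  · exact isClosed_iInter fun s => isClosed_eq
      (continuous_finset_sum _ fun a _ => (continuous_apply a).comp (continuous_apply s))
      continuous_const

lemma isCompact_stoch : IsCompact {d : Matrix (Fin m) (Fin n) ℝ | IsStoch m n d} := by
  have h1 : IsCompact (Set.pi Set.univ
      (fun _ : Fin m => Set.pi Set.univ fun _ : Fin n => Set.Icc (0:ℝ) 1)) :=
    isCompact_univ_pi fun _ => isCompact_univ_pi fun _ => isCompact_Icc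
  apply h1.of_isClosed_subset isClosed_stoch
  rintro d ⟨h0, hs⟩
  rw [Set.mem_univ_pi]
  intro s
  rw [Set.mem_univ_pi]
  intro a
  refine ⟨h0 s a, ?_⟩
  calc d s a ≤ ∑ a', d s a' := Finset.single_le_sum (fun a' _ => h0 s a') (Finset.mem_univ a)
  _ = 1 := hs s

lemma isClosed_Pol : IsClosed (Pol m n) := by
  have h : Pol m n = ⋂ t, (fun π : ℕ → Matrix (Fin m) (Fin n) ℝ => π t) ⁻¹'
      {d | IsStoch m n d} := by
    ext π; simp [Pol, Set.mem_iInter]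
  rw [h]
  exact isClosed_iInter fun t => isClosed_stoch.preimage (continuous_apply t)

lemma isCompact_Pol : IsCompact (Pol m n) := by
  have h : Pol m n = Set.pi Set.univ fun _ : ℕ => {d : Matrix (Fin m) (Fin n) ℝ | IsStoch m n d} := by
    ext π; simp [Pol, Set.mem_univ_pi]
  rw [h]
  exact isCompact_univ_pi fun _ => isCompact_stoch

lemma continuous_entry (t : ℕ) (s : Fin m) (a : Fin n) :
    Continuous fun π : ℕ → Matrix (Fin m) (Fin n) ℝ => π t s a :=
  (continuous_apply a).comp ((continuous_apply s).comp (continuous_apply t))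

lemma continuous_Qrev (β γ : ℝ) (p : Fin m → Fin n → Fin m → ℝ)
    (R : Matrix (Fin m) (Fin n) ℝ) (T k : ℕ) (s : Fin m) (a : Fin n) :
    Continuous fun π : ℕ → Matrix (Fin m) (Fin n) ℝ => Qrev β γ p π R T k s a := by
  induction k generalizing s a with
  | zero => simpa [Qrev] using (continuous_const : Continuous fun _ : ℕ → Matrix (Fin m) (Fin n) ℝ => Real.exp (γ * β ^ (T-1) * R s a))
  | succ k ih =>
    simp only [Qrev]
    exact continuous_const.mul (continuous_finset_sum _ fun s' _ =>
      continuous_const.mul (continuous_finset_sum _ fun a' _ =>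
        (continuous_entry _ _ _).mul (ih s' a')))

lemma continuous_JT (β γ : ℝ) (p : Fin m → Fin n → Fin m → ℝ)
    (R : Matrix (Fin m) (Fin n) ℝ) (T : ℕ) (x : Fin m) :
    Continuous fun π : ℕ → Matrix (Fin m) (Fin n) ℝ => JT β γ p π R T x := by
  simp only [JT, Qmat]
  exact continuous_finset_sum _ fun a _ =>
    (continuous_entry _ _ _).mul (continuous_Qrev β γ p R T _ x a)

lemma continuous_Ppi (p : Fin m → Fin n → Fin m → ℝ) (t : ℕ) (s s' : Fin m) :
    Continuous fun π : ℕ → Matrix (Fin m) (Fin n) ℝ => Ppi p π t s s' := by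
  induction t generalizing s s' with
  | zero => simpa [Ppi] using (continuous_const : Continuous fun _ : ℕ → Matrix (Fin m) (Fin n) ℝ => (1 : Matrix (Fin m) (Fin m) ℝ) s s')
  | succ t ih =>
    simp only [Ppi, Matrix.mul_apply, Pmat]
    exact continuous_finset_sum _ fun j _ => (ih s j).mul
      (continuous_finset_sum _ fun a _ => continuous_const.mul (continuous_entry _ _ _))

lemma continuous_VT (β : ℝ) (p : Fin m → Fin n → Fin m → ℝ)
    (R : Matrix (Fin m) (Fin n) ℝ) (T : ℕ) (x : Fin m) :
    Continuous fun π : ℕ → Matrix (Fin m) (Fin n) ℝ => VT β p π R T x := by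
  simp only [VT, Matrix.mulVec, dotProduct, Rvec]
  exact continuous_finset_sum _ fun t _ => continuous_const.mul
    (continuous_finset_sum _ fun j _ => (continuous_Ppi p t x j).mul
      (continuous_finset_sum _ fun a _ => continuous_const.mul (continuous_entry _ _ _)))

end Stmt19Aux
namespace Stmt19Aux

open Finset Filter

variable {m n : ℕ} {p : Fin m → Fin n → Fin m → ℝ} {β γ C : ℝ}

lemma Pmat_nonneg (hp : IsTransKer m n p) {d : Matrix (Fin m) (Fin n) ℝ} (hd : IsStoch m n d)
    (s s' : Fin m) : 0 ≤ Pmat p d s s' :=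
  Finset.sum_nonneg fun a _ => mul_nonneg (hp.1 s a s') (hd.1 s a)

lemma Pmat_row_sum (hp : IsTransKer m n p) {d : Matrix (Fin m) (Fin n) ℝ} (hd : IsStoch m n d)
    (s : Fin m) : ∑ s', Pmat p d s s' = 1 := by
  simp only [Pmat]
  rw [Finset.sum_comm]
  calc ∑ a, ∑ s', p s a s' * d s a = ∑ a, d s a := by
        apply Finset.sum_congr rfl
        intro a _
        rw [← Finset.sum_mul, hp.2 s a, one_mul]
    _ = 1 := hd.2 s

lemma Ppi_nonneg (hp : IsTransKer m n p) {π : ℕ → Matrix (Fin m) (Fin n) ℝ}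
    (hπ : ∀ t, IsStoch m n (π t)) (t : ℕ) (s s' : Fin m) : 0 ≤ Ppi p π t s s' := by
  induction t generalizing s s' with
  | zero => by_cases h : s = s' <;> simp [Ppi, Matrix.one_apply, h]
  | succ t ih =>
    simp only [Ppi, Matrix.mul_apply]
    exact Finset.sum_nonneg fun j _ => mul_nonneg (ih s j) (Pmat_nonneg hp (hπ t) j s')

lemma Ppi_row_sum (hp : IsTransKer m n p) {π : ℕ → Matrix (Fin m) (Fin n) ℝ}
    (hπ : ∀ t, IsStoch m n (π t)) (t : ℕ) (s : Fin m) : ∑ s', Ppi p π t s s' = 1 := by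
  induction t generalizing s with
  | zero => simp [Ppi, Matrix.one_apply]
  | succ t ih =>
    simp only [Ppi, Matrix.mul_apply]
    rw [Finset.sum_comm]
    calc ∑ j, ∑ s', Ppi p π t s j * Pmat p (π t) j s'
        = ∑ j, Ppi p π t s j := by
          apply Finset.sum_congr rfl
          intro j _
          rw [← Finset.mul_sum, Pmat_row_sum hp (hπ t), mul_one]
    _ = 1 := ih s

lemma Rvec_abs_le (hC : 0 ≤ C) {R d : Matrix (Fin m) (Fin n) ℝ} (hR : ∀ s a, |R s a| ≤ C)
    (hd : IsStoch m n d) (s : Fin m) : |Rvec R d s| ≤ C := by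
  calc |Rvec R d s| ≤ ∑ a, |R s a * d s a| := Finset.abs_sum_le_sum_abs _ _
  _ = ∑ a, |R s a| * d s a := by
      apply Finset.sum_congr rfl; intro a _; rw [abs_mul, abs_of_nonneg (hd.1 s a)]
  _ ≤ ∑ a, C * d s a := by
      apply Finset.sum_le_sum; intro a _; exact mul_le_mul_of_nonneg_right (hR s a) (hd.1 s a)
  _ = C := by rw [← Finset.mul_sum, hd.2 s, mul_one]

lemma mulVec_abs_le (hC : 0 ≤ C) {P : Matrix (Fin m) (Fin m) ℝ} {v : Fin m → ℝ}
    (hP0 : ∀ s s', 0 ≤ P s s') (hP1 : ∀ s, ∑ s', P s s' = 1)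
    (hv : ∀ i, |v i| ≤ C) (x : Fin m) : |(P *ᵥ v) x| ≤ C := by
  simp only [Matrix.mulVec, dotProduct]
  calc |∑ j, P x j * v j| ≤ ∑ j, |P x j * v j| := Finset.abs_sum_le_sum_abs _ _
  _ = ∑ j, P x j * |v j| := by
      apply Finset.sum_congr rfl; intro j _; rw [abs_mul, abs_of_nonneg (hP0 x j)]
  _ ≤ ∑ j, P x j * C := by
      apply Finset.sum_le_sum; intro j _; exact mul_le_mul_of_nonneg_left (hv j) (hP0 x j)
  _ = C := by rw [← Finset.sum_mul, hP1 x, one_mul]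

lemma VT_term_abs_le (hp : IsTransKer m n p) (hβ : 0 ≤ β) (hC : 0 ≤ C)
    {π : ℕ → Matrix (Fin m) (Fin n) ℝ} (hπ : ∀ t, IsStoch m n (π t))
    {R : Matrix (Fin m) (Fin n) ℝ} (hR : ∀ s a, |R s a| ≤ C) (t : ℕ) (x : Fin m) :
    |β ^ t * (Ppi p π t *ᵥ Rvec R (π t)) x| ≤ C * β ^ t := by
  rw [abs_mul, abs_pow, abs_of_nonneg hβ, mul_comm]
  exact mul_le_mul_of_nonneg_right
    (mulVec_abs_le hC (Ppi_nonneg hp hπ t) (Ppi_row_sum hp hπ t)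
      (Rvec_abs_le hC hR (hπ t)) x) (pow_nonneg hβ t)

end Stmt19Aux
namespace Stmt19Aux

open Finset Filter

variable {m n : ℕ} {p : Fin m → Fin n → Fin m → ℝ} {β γ C : ℝ}

lemma summable_Vterm (hp : IsTransKer m n p) (hβ0 : 0 ≤ β) (hβ1 : β < 1) (hC : 0 ≤ C)
    {π : ℕ → Matrix (Fin m) (Fin n) ℝ} (hπ : ∀ t, IsStoch m n (π t))
    {R : Matrix (Fin m) (Fin n) ℝ} (hR : ∀ s a, |R s a| ≤ C) (x : Fin m) :
    Summable (fun t => β ^ t * (Ppi p π t *ᵥ Rvec R (π t)) x) := by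
  apply Summable.of_norm_bounded (g := fun t => C * β ^ t)
    ((summable_geometric_of_lt_one hβ0 hβ1).mul_left C)
  intro t
  exact VT_term_abs_le hp hβ0 hC hπ hR t x

lemma Vinf_sub_VT_abs_le (hp : IsTransKer m n p) (hβ0 : 0 ≤ β) (hβ1 : β < 1) (hC : 0 ≤ C)
    {π : ℕ → Matrix (Fin m) (Fin n) ℝ} (hπ : ∀ t, IsStoch m n (π t))
    {R : Matrix (Fin m) (Fin n) ℝ} (hR : ∀ s a, |R s a| ≤ C) (T : ℕ) (x : Fin m) :
    |Vinf β p π R x - VT β p π R T x| ≤ C / (1 - β) * β ^ T := by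
  have hsum := summable_Vterm hp hβ0 hβ1 hC hπ hR (R := R) x
  have hsplit := Summable.sum_add_tsum_nat_add T hsum
  have heq : Vinf β p π R x - VT β p π R T x
      = ∑' t, β ^ (t + T) * (Ppi p π (t + T) *ᵥ Rvec R (π (t + T))) x := by
    simp only [Vinf, VT]
    linarith [hsplit]
  rw [heq]
  have hb : ∀ t : ℕ, |β ^ (t + T) * (Ppi p π (t + T) *ᵥ Rvec R (π (t + T))) x|
      ≤ C * β ^ T * β ^ t := by
    intro t
    calc |β ^ (t + T) * (Ppi p π (t + T) *ᵥ Rvec R (π (t + T))) x| ≤ C * β ^ (t + T) :=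
      VT_term_abs_le hp hβ0 hC hπ hR (t + T) x
    _ = C * β ^ T * β ^ t := by rw [pow_add]; ring
  have hsumb : Summable (fun t : ℕ => C * β ^ T * β ^ t) :=
    (summable_geometric_of_lt_one hβ0 hβ1).mul_left _
  calc |∑' t, β ^ (t + T) * (Ppi p π (t + T) *ᵥ Rvec R (π (t + T))) x|
      ≤ ∑' t, C * β ^ T * β ^ t := by
        rw [← Real.norm_eq_abs]
        exact tsum_of_norm_bounded hsumb.hasSum hb
  _ = C * β ^ T * (1 - β)⁻¹ := by
        rw [tsum_mul_left, tsum_geometric_of_lt_one hβ0 hβ1]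
  _ = C / (1 - β) * β ^ T := by ring

lemma continuousOn_Vinf (hp : IsTransKer m n p) (hβ0 : 0 ≤ β) (hβ1 : β < 1) (hC : 0 ≤ C)
    {R : Matrix (Fin m) (Fin n) ℝ} (hR : ∀ s a, |R s a| ≤ C) (x : Fin m) :
    ContinuousOn (fun π : ℕ → Matrix (Fin m) (Fin n) ℝ => Vinf β p π R x) (Pol m n) := by
  simp only [Vinf]
  apply continuousOn_tsum
    (fun t => Continuous.continuousOn (by
      simp only [Matrix.mulVec, dotProduct, Rvec]
      exact continuous_const.mul
        (continuous_finset_sum _ fun j _ => (continuous_Ppi p t x j).mul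
          (continuous_finset_sum _ fun a _ => continuous_const.mul (continuous_entry _ _ _)))))
    ((summable_geometric_of_lt_one hβ0 hβ1).mul_left C)
  intro t π hπ
  exact VT_term_abs_le hp hβ0 hC hπ hR t x

end Stmt19Aux
namespace Stmt19Aux

open Finset Filter

variable {m n : ℕ} {p : Fin m → Fin n → Fin m → ℝ} {β γ C : ℝ}

/-- convex combination `∑ s', p(s'|s,a) ∑ a', d(a'|s') Q(s',a')`. -/
noncomputable def comb (p : Fin m → Fin n → Fin m → ℝ) (d : Matrix (Fin m) (Fin n) ℝ)
    (Q : Matrix (Fin m) (Fin n) ℝ) (s : Fin m) (a : Fin n) : ℝ :=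
  ∑ s', p s a s' * ∑ a', d s' a' * Q s' a'

lemma comb_le_of_le (hp : IsTransKer m n p) {d : Matrix (Fin m) (Fin n) ℝ}
    (hd : IsStoch m n d) {Q : Matrix (Fin m) (Fin n) ℝ} {B : ℝ}
    (hQ : ∀ s' a', Q s' a' ≤ B) (s : Fin m) (a : Fin n) : comb p d Q s a ≤ B := by
  unfold comb
  calc ∑ s', p s a s' * ∑ a', d s' a' * Q s' a'
      ≤ ∑ s', p s a s' * B := by
        apply Finset.sum_le_sum
        intro s' _
        apply mul_le_mul_of_nonneg_left _ (hp.1 s a s')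
        calc ∑ a', d s' a' * Q s' a' ≤ ∑ a', d s' a' * B := by
              apply Finset.sum_le_sum
              intro a' _
              exact mul_le_mul_of_nonneg_left (hQ s' a') (hd.1 s' a')
        _ = B := by rw [← Finset.sum_mul, hd.2 s', one_mul]
  _ = B := by rw [← Finset.sum_mul, hp.2 s a, one_mul]

lemma le_comb_of_le (hp : IsTransKer m n p) {d : Matrix (Fin m) (Fin n) ℝ}
    (hd : IsStoch m n d) {Q : Matrix (Fin m) (Fin n) ℝ} {B : ℝ}
    (hQ : ∀ s' a', B ≤ Q s' a') (s : Fin m) (a : Fin n) : B ≤ comb p d Q s a := by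
  unfold comb
  calc B = ∑ s', p s a s' * B := by rw [← Finset.sum_mul, hp.2 s a, one_mul]
  _ ≤ ∑ s', p s a s' * ∑ a', d s' a' * Q s' a' := by
        apply Finset.sum_le_sum
        intro s' _
        apply mul_le_mul_of_nonneg_left _ (hp.1 s a s')
        calc B = ∑ a', d s' a' * B := by rw [← Finset.sum_mul, hd.2 s', one_mul]
        _ ≤ ∑ a', d s' a' * Q s' a' := by
              apply Finset.sum_le_sum
              intro a' _
              exact mul_le_mul_of_nonneg_left (hQ s' a') (hd.1 s' a')

lemma comb_mono (hp : IsTransKer m n p) {d : Matrix (Fin m) (Fin n) ℝ}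
    (hd : IsStoch m n d) {Q Q' : Matrix (Fin m) (Fin n) ℝ}
    (hQ : ∀ s' a', Q s' a' ≤ Q' s' a') (s : Fin m) (a : Fin n) :
    comb p d Q s a ≤ comb p d Q' s a := by
  unfold comb
  apply Finset.sum_le_sum
  intro s' _
  apply mul_le_mul_of_nonneg_left _ (hp.1 s a s')
  apply Finset.sum_le_sum
  intro a' _
  exact mul_le_mul_of_nonneg_left (hQ s' a') (hd.1 s' a')

lemma comb_mul_const (d Q : Matrix (Fin m) (Fin n) ℝ) (c : ℝ) (s : Fin m) (a : Fin n) :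
    comb p d (fun s' a' => Q s' a' * c) s a = comb p d Q s a * c := by
  unfold comb
  rw [Finset.sum_mul]
  apply Finset.sum_congr rfl
  intro s' _
  rw [mul_assoc, Finset.sum_mul]
  congr 1
  apply Finset.sum_congr rfl
  intro a' _
  ring

lemma Qrev_succ_eq (π : ℕ → Matrix (Fin m) (Fin n) ℝ) (R : Matrix (Fin m) (Fin n) ℝ)
    (T k : ℕ) (s : Fin m) (a : Fin n) :
    Qrev β γ p π R T (k + 1) s a
      = Real.exp (γ * β ^ (T - 1 - (k + 1)) * R s a) *
        comb p (π (T - 1 - k)) (Qrev β γ p π R T k) s a := rfl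

lemma Qrev_pos (hp : IsTransKer m n p) {π : ℕ → Matrix (Fin m) (Fin n) ℝ}
    (hπ : ∀ t, IsStoch m n (π t)) (R : Matrix (Fin m) (Fin n) ℝ) (T : ℕ) :
    ∀ k s a, 0 ≤ Qrev β γ p π R T k s a := by
  intro k
  induction k with
  | zero => intro s a; exact (Real.exp_pos _).le
  | succ k ih =>
    intro s a
    rw [Qrev_succ_eq]
    exact mul_nonneg (Real.exp_pos _).le (le_comb_of_le hp (hπ _) (fun s' a' => ih s' a') s a)

lemma Qrev_le_bound (hp : IsTransKer m n p) (hβ0 : 0 < β) (hβ1 : β < 1) (hC : 0 ≤ C)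
    {π : ℕ → Matrix (Fin m) (Fin n) ℝ} (hπ : ∀ t, IsStoch m n (π t))
    {R : Matrix (Fin m) (Fin n) ℝ} (hR : ∀ s a, |R s a| ≤ C) (T : ℕ) :
    ∀ k, k ≤ T - 1 → ∀ s a,
      Qrev β γ p π R T k s a ≤ Real.exp (|γ| * C * β ^ (T - 1 - k) / (1 - β)) := by
  have h1β : 0 < 1 - β := by linarith
  intro k
  induction k with
  | zero =>
    intro _ s a
    show Real.exp (γ * β ^ (T - 1) * R s a) ≤ _
    apply Real.exp_le_exp.2
    have h1 : γ * β ^ (T - 1) * R s a ≤ |γ| * C * β ^ (T - 1) := by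
      calc γ * β ^ (T - 1) * R s a ≤ |γ * β ^ (T - 1) * R s a| := le_abs_self _
      _ = |γ| * β ^ (T - 1) * |R s a| := by
          rw [abs_mul, abs_mul, abs_pow, abs_of_nonneg hβ0.le]
      _ ≤ |γ| * β ^ (T - 1) * C :=
          mul_le_mul_of_nonneg_left (hR s a) (by positivity)
      _ = |γ| * C * β ^ (T - 1) := by ring
    have h2 : |γ| * C * β ^ (T - 1) ≤ |γ| * C * β ^ (T - 1 - 0) / (1 - β) := by
      rw [Nat.sub_zero, div_eq_mul_inv]
      nth_rewrite 1 [← mul_one (|γ| * C * β ^ (T-1))]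
      apply mul_le_mul_of_nonneg_left _ (by positivity)
      rw [le_inv_comm₀ one_pos h1β]
      · linarith
    linarith
  | succ k ih =>
    intro hk s a
    have hk' : k ≤ T - 1 := le_trans (Nat.le_succ k) hk
    rw [Qrev_succ_eq]
    have hcomb : comb p (π (T - 1 - k)) (Qrev β γ p π R T k) s a
        ≤ Real.exp (|γ| * C * β ^ (T - 1 - k) / (1 - β)) :=
      comb_le_of_le hp (hπ _) (fun s' a' => ih hk' s' a') s a
    have hexp : Real.exp (γ * β ^ (T - 1 - (k+1)) * R s a)
        ≤ Real.exp (|γ| * C * β ^ (T - 1 - (k + 1))) := by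
      apply Real.exp_le_exp.2
      calc γ * β ^ (T-1-(k+1)) * R s a ≤ |γ * β ^ (T-1-(k+1)) * R s a| := le_abs_self _
      _ = |γ| * β ^ (T-1-(k+1)) * |R s a| := by
          rw [abs_mul, abs_mul, abs_pow, abs_of_nonneg hβ0.le]
      _ ≤ |γ| * β ^ (T-1-(k+1)) * C := mul_le_mul_of_nonneg_left (hR s a) (by positivity)
      _ = |γ| * C * β ^ (T-1-(k+1)) := by ring
    calc Real.exp (γ * β ^ (T - 1 - (k+1)) * R s a) *
          comb p (π (T - 1 - k)) (Qrev β γ p π R T k) s a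
        ≤ Real.exp (|γ| * C * β ^ (T - 1 - (k + 1))) *
          Real.exp (|γ| * C * β ^ (T - 1 - k) / (1 - β)) := by
          apply mul_le_mul hexp hcomb _ (Real.exp_pos _).le
          exact le_comb_of_le hp (hπ _) (fun s' a' => Qrev_pos hp hπ R T k s' a') s a
    _ = Real.exp (|γ| * C * β ^ (T - 1 - (k+1)) + |γ| * C * β ^ (T - 1 - k) / (1 - β)) := by
          rw [← Real.exp_add]
    _ ≤ Real.exp (|γ| * C * β ^ (T - 1 - (k + 1)) / (1 - β)) := by
          apply Real.exp_le_exp.2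
          have hidx : T - 1 - k = (T - 1 - (k + 1)) + 1 := by omega
          rw [hidx, pow_succ]
          have heq : |γ| * C * β ^ (T - 1 - (k+1)) + |γ| * C * (β ^ (T - 1 - (k+1)) * β) / (1 - β)
              = |γ| * C * β ^ (T - 1 - (k + 1)) / (1 - β) := by
            field_simp
            ring
          rw [heq]
    
end Stmt19Aux
namespace Stmt19Aux

open Finset Filter

variable {m n : ℕ} {p : Fin m → Fin n → Fin m → ℝ} {β γ C : ℝ}

lemma Qrev_compare (hp : IsTransKer m n p) (hβ0 : 0 < β) (hC : 0 ≤ C)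
    {π : ℕ → Matrix (Fin m) (Fin n) ℝ} (hπ : ∀ t, IsStoch m n (π t))
    {R : Matrix (Fin m) (Fin n) ℝ} (hR : ∀ s a, |R s a| ≤ C) (T : ℕ) (hT : 1 ≤ T) :
    ∀ k, k ≤ T - 1 → ∀ s a,
      Qrev β γ p π R (T + 1) (k + 1) s a
          ≤ Qrev β γ p π R T k s a * Real.exp (|γ| * C * β ^ T) ∧
      Qrev β γ p π R T k s a * Real.exp (-(|γ| * C * β ^ T)) 
          ≤ Qrev β γ p π R (T + 1) (k + 1) s a := by
  have habs : ∀ (s' : Fin m) (a' : Fin n), |γ * β ^ T * R s' a'| ≤ |γ| * C * β ^ T := by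
    intro s' a'
    rw [abs_mul, abs_mul, abs_pow, abs_of_nonneg hβ0.le]
    calc |γ| * β ^ T * |R s' a'| ≤ |γ| * β ^ T * C :=
      mul_le_mul_of_nonneg_left (hR s' a') (by positivity)
    _ = |γ| * C * β ^ T := by ring
  intro k
  induction k with
  | zero =>
    intro _ s a
    have hidx1 : T + 1 - 1 - (0 + 1) = T - 1 := by omega
    have hidx2 : T + 1 - 1 - 0 = T := by omega
    have h0 : Qrev β γ p π R (T + 1) 1 s a
        = Real.exp (γ * β ^ (T - 1) * R s a) *
          comb p (π T) (Qrev β γ p π R (T + 1) 0) s a := by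
      rw [Qrev_succ_eq, hidx1, hidx2]
    have hbase : Qrev β γ p π R T 0 s a = Real.exp (γ * β ^ (T - 1) * R s a) := rfl
    have hup : comb p (π T) (Qrev β γ p π R (T + 1) 0) s a ≤ Real.exp (|γ| * C * β ^ T) := by
      apply comb_le_of_le hp (hπ T)
      intro s' a'
      show Real.exp (γ * β ^ (T + 1 - 1) * R s' a') ≤ _
      rw [show T + 1 - 1 = T from rfl]
      exact Real.exp_le_exp.2 (le_trans (le_abs_self _) (habs s' a'))
    have hlo : Real.exp (-(|γ| * C * β ^ T)) ≤ comb p (π T) (Qrev β γ p π R (T + 1) 0) s a := by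
      apply le_comb_of_le hp (hπ T)
      intro s' a'
      show _ ≤ Real.exp (γ * β ^ (T + 1 - 1) * R s' a')
      rw [show T + 1 - 1 = T from rfl]
      exact Real.exp_le_exp.2 (by linarith [neg_abs_le (γ * β ^ T * R s' a'), habs s' a'])
    constructor
    · rw [h0, hbase]
      exact mul_le_mul_of_nonneg_left hup (Real.exp_pos _).le
    · rw [h0, hbase]
      exact mul_le_mul_of_nonneg_left hlo (Real.exp_pos _).le
  | succ k ih =>
    intro hk s a
    have hk' : k ≤ T - 1 := le_trans (Nat.le_succ k) hk
    have hidx1 : T + 1 - 1 - (k + 1 + 1) = T - 1 - (k + 1) := by omega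
    have hidx2 : T + 1 - 1 - (k + 1) = T - 1 - k := by omega
    have h0 : Qrev β γ p π R (T + 1) (k + 1 + 1) s a
        = Real.exp (γ * β ^ (T - 1 - (k + 1)) * R s a) *
          comb p (π (T - 1 - k)) (Qrev β γ p π R (T + 1) (k + 1)) s a := by
      rw [Qrev_succ_eq, hidx1, hidx2]
    rw [h0, Qrev_succ_eq]
    have hcm : comb p (π (T - 1 - k)) (Qrev β γ p π R (T + 1) (k + 1)) s a
        ≤ comb p (π (T - 1 - k)) (Qrev β γ p π R T k) s a * Real.exp (|γ| * C * β ^ T) := by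
      calc comb p (π (T - 1 - k)) (Qrev β γ p π R (T + 1) (k + 1)) s a
          ≤ comb p (π (T - 1 - k))
              (fun s' a' => Qrev β γ p π R T k s' a' * Real.exp (|γ| * C * β ^ T)) s a :=
            comb_mono hp (hπ _) (fun s' a' => (ih hk' s' a').1) s a
      _ = comb p (π (T - 1 - k)) (Qrev β γ p π R T k) s a * Real.exp (|γ| * C * β ^ T) :=
            comb_mul_const _ _ _ s a
    have hcM : comb p (π (T - 1 - k)) (Qrev β γ p π R T k) s a * Real.exp (-(|γ| * C * β ^ T))
        ≤ comb p (π (T - 1 - k)) (Qrev β γ p π R (T + 1) (k + 1)) s a := by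
      calc comb p (π (T - 1 - k)) (Qrev β γ p π R T k) s a * Real.exp (-(|γ| * C * β ^ T))
          = comb p (π (T - 1 - k))
              (fun s' a' => Qrev β γ p π R T k s' a' * Real.exp (-(|γ| * C * β ^ T))) s a :=
            (comb_mul_const _ _ _ s a).symm
      _ ≤ comb p (π (T - 1 - k)) (Qrev β γ p π R (T + 1) (k + 1)) s a :=
            comb_mono hp (hπ _) (fun s' a' => (ih hk' s' a').2) s a
    constructor
    · calc Real.exp (γ * β ^ (T - 1 - (k + 1)) * R s a) *
            comb p (π (T - 1 - k)) (Qrev β γ p π R (T + 1) (k + 1)) s a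
          ≤ Real.exp (γ * β ^ (T - 1 - (k + 1)) * R s a) *
            (comb p (π (T - 1 - k)) (Qrev β γ p π R T k) s a * Real.exp (|γ| * C * β ^ T)) :=
            mul_le_mul_of_nonneg_left hcm (Real.exp_pos _).le
      _ = Real.exp (γ * β ^ (T - 1 - (k + 1)) * R s a) *
            comb p (π (T - 1 - k)) (Qrev β γ p π R T k) s a * Real.exp (|γ| * C * β ^ T) := by
            ring
    · calc Real.exp (γ * β ^ (T - 1 - (k + 1)) * R s a) *
            comb p (π (T - 1 - k)) (Qrev β γ p π R T k) s a * Real.exp (-(|γ| * C * β ^ T))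
          = Real.exp (γ * β ^ (T - 1 - (k + 1)) * R s a) *
            (comb p (π (T - 1 - k)) (Qrev β γ p π R T k) s a * Real.exp (-(|γ| * C * β ^ T))) := by
            ring
      _ ≤ Real.exp (γ * β ^ (T - 1 - (k + 1)) * R s a) *
            comb p (π (T - 1 - k)) (Qrev β γ p π R (T + 1) (k + 1)) s a :=
            mul_le_mul_of_nonneg_left hcM (Real.exp_pos _).le

lemma JT_nonneg (hp : IsTransKer m n p) {π : ℕ → Matrix (Fin m) (Fin n) ℝ}
    (hπ : ∀ t, IsStoch m n (π t)) (R : Matrix (Fin m) (Fin n) ℝ) (T : ℕ) (x : Fin m) :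
    0 ≤ JT β γ p π R T x :=
  Finset.sum_nonneg fun a _ => mul_nonneg ((hπ 0).1 x a) (Qrev_pos hp hπ R T _ x a)

lemma JT_le_bound (hp : IsTransKer m n p) (hβ0 : 0 < β) (hβ1 : β < 1) (hC : 0 ≤ C)
    {π : ℕ → Matrix (Fin m) (Fin n) ℝ} (hπ : ∀ t, IsStoch m n (π t))
    {R : Matrix (Fin m) (Fin n) ℝ} (hR : ∀ s a, |R s a| ≤ C) (T : ℕ) (x : Fin m) :
    JT β γ p π R T x ≤ Real.exp (|γ| * C / (1 - β)) := by
  have h1β : 0 < 1 - β := by linarith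
  have hb : ∀ a, Qrev β γ p π R T (T - 1 - 0) x a ≤ Real.exp (|γ| * C / (1 - β)) := by
    intro a
    have := Qrev_le_bound (γ := γ) hp hβ0 hβ1 hC hπ hR T (T - 1) (le_refl _) x a
    rw [Nat.sub_self] at this
    rw [Nat.sub_zero]
    calc Qrev β γ p π R T (T - 1) x a ≤ Real.exp (|γ| * C * β ^ 0 / (1 - β)) := this
    _ = Real.exp (|γ| * C / (1 - β)) := by norm_num
  calc JT β γ p π R T x ≤ ∑ a, π 0 x a * Real.exp (|γ| * C / (1 - β)) := by
        apply Finset.sum_le_sum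
        intro a _
        exact mul_le_mul_of_nonneg_left (hb a) ((hπ 0).1 x a)
  _ = Real.exp (|γ| * C / (1 - β)) := by rw [← Finset.sum_mul, (hπ 0).2 x, one_mul]

lemma JT_step (hp : IsTransKer m n p) (hβ0 : 0 < β) (hC : 0 ≤ C)
    {π : ℕ → Matrix (Fin m) (Fin n) ℝ} (hπ : ∀ t, IsStoch m n (π t))
    {R : Matrix (Fin m) (Fin n) ℝ} (hR : ∀ s a, |R s a| ≤ C) (T : ℕ) (hT : 1 ≤ T) (x : Fin m) :
    JT β γ p π R (T + 1) x ≤ JT β γ p π R T x * Real.exp (|γ| * C * β ^ T) ∧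
    JT β γ p π R T x * Real.exp (-(|γ| * C * β ^ T)) ≤ JT β γ p π R (T + 1) x := by
  have hidx1 : T + 1 - 1 - 0 = (T - 1) + 1 := by omega
  have hcmp := Qrev_compare (γ := γ) hp hβ0 hC hπ hR T hT (T - 1) (le_refl _)
  constructor
  · calc JT β γ p π R (T + 1) x = ∑ a, π 0 x a * Qrev β γ p π R (T + 1) ((T - 1) + 1) x a := by
          simp only [JT, Qmat, hidx1]
    _ ≤ ∑ a, π 0 x a * (Qrev β γ p π R T (T - 1) x a * Real.exp (|γ| * C * β ^ T)) := by
          apply Finset.sum_le_sum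
          intro a _
          exact mul_le_mul_of_nonneg_left ((hcmp x a).1) ((hπ 0).1 x a)
    _ = JT β γ p π R T x * Real.exp (|γ| * C * β ^ T) := by
          simp only [JT, Qmat, Nat.sub_zero, Finset.sum_mul]
          apply Finset.sum_congr rfl
          intro a _
          ring
  · calc JT β γ p π R T x * Real.exp (-(|γ| * C * β ^ T))
        = ∑ a, π 0 x a * (Qrev β γ p π R T (T - 1) x a * Real.exp (-(|γ| * C * β ^ T))) := by
          simp only [JT, Qmat, Nat.sub_zero, Finset.sum_mul]
          apply Finset.sum_congr rfl
          intro a _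
          ring
    _ ≤ ∑ a, π 0 x a * Qrev β γ p π R (T + 1) ((T - 1) + 1) x a := by
          apply Finset.sum_le_sum
          intro a _
          exact mul_le_mul_of_nonneg_left ((hcmp x a).2) ((hπ 0).1 x a)
    _ = JT β γ p π R (T + 1) x := by simp only [JT, Qmat, hidx1]

lemma JT_chain (hp : IsTransKer m n p) (hβ0 : 0 < β) (hC : 0 ≤ C)
    {π : ℕ → Matrix (Fin m) (Fin n) ℝ} (hπ : ∀ t, IsStoch m n (π t))
    {R : Matrix (Fin m) (Fin n) ℝ} (hR : ∀ s a, |R s a| ≤ C) (T : ℕ) (hT : 1 ≤ T) (x : Fin m) :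
    ∀ T', T ≤ T' →
      JT β γ p π R T' x ≤ JT β γ p π R T x *
          Real.exp (|γ| * C * ∑ t ∈ Finset.Ico T T', β ^ t) ∧
      JT β γ p π R T x * Real.exp (-(|γ| * C * ∑ t ∈ Finset.Ico T T', β ^ t))
          ≤ JT β γ p π R T' x := by
    intro T' hTT'
    induction T' with
    | zero =>
      have : T = 0 := Nat.le_zero.1 hTT'
      omega
    | succ T' ih =>
      by_cases hc : T = T' + 1
      · subst hc
        simp
      · have hTT : T ≤ T' := by omega
        have ihh := ih hTT
        have hstep := JT_step (γ := γ) hp hβ0 hC hπ hR T' (le_trans hT hTT) x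
        have hsum : ∑ t ∈ Finset.Ico T (T' + 1), β ^ t
            = (∑ t ∈ Finset.Ico T T', β ^ t) + β ^ T' := Finset.sum_Ico_succ_top hTT _
        constructor
        · calc JT β γ p π R (T' + 1) x
              ≤ JT β γ p π R T' x * Real.exp (|γ| * C * β ^ T') := hstep.1
          _ ≤ (JT β γ p π R T x * Real.exp (|γ| * C * ∑ t ∈ Finset.Ico T T', β ^ t)) *
                Real.exp (|γ| * C * β ^ T') :=
              mul_le_mul_of_nonneg_right ihh.1 (Real.exp_pos _).le
          _ = JT β γ p π R T x * Real.exp (|γ| * C * ∑ t ∈ Finset.Ico T (T' + 1), β ^ t) := by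
              rw [hsum, mul_add, Real.exp_add]
              ring
        · have hEq : JT β γ p π R T x *
                Real.exp (-(|γ| * C * ∑ t ∈ Finset.Ico T (T' + 1), β ^ t))
              = (JT β γ p π R T x * Real.exp (-(|γ| * C * ∑ t ∈ Finset.Ico T T', β ^ t))) *
                Real.exp (-(|γ| * C * β ^ T')) := by
            rw [hsum, mul_add, neg_add, Real.exp_add]
            ring
          rw [hEq]
          calc (JT β γ p π R T x * Real.exp (-(|γ| * C * ∑ t ∈ Finset.Ico T T', β ^ t))) *
                Real.exp (-(|γ| * C * β ^ T'))
              ≤ JT β γ p π R T' x * Real.exp (-(|γ| * C * β ^ T')) :=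
              mul_le_mul_of_nonneg_right ihh.2 (Real.exp_pos _).le
          _ ≤ JT β γ p π R (T' + 1) x := hstep.2

lemma JT_one_eq_zero (π : ℕ → Matrix (Fin m) (Fin n) ℝ) (R : Matrix (Fin m) (Fin n) ℝ)
    (x : Fin m) : JT β γ p π R 1 x = JT β γ p π R 0 x := rfl

end Stmt19Aux
namespace Stmt19Aux

open Finset Filter

variable {m n : ℕ} {p : Fin m → Fin n → Fin m → ℝ} {β γ C : ℝ}

lemma JT_dist_step (hp : IsTransKer m n p) (hβ0 : 0 < β) (hβ1 : β < 1) (hC : 0 ≤ C)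
    {π : ℕ → Matrix (Fin m) (Fin n) ℝ} (hπ : ∀ t, IsStoch m n (π t))
    {R : Matrix (Fin m) (Fin n) ℝ} (hR : ∀ s a, |R s a| ≤ C) (T : ℕ) (x : Fin m) :
    dist (JT β γ p π R T x) (JT β γ p π R (T + 1) x)
      ≤ (Real.exp (|γ| * C / (1 - β)) * (|γ| * C * Real.exp (|γ| * C))) * β ^ T := by
  rcases Nat.eq_zero_or_pos T with hT | hT
  · subst hT
    rw [JT_one_eq_zero (β := β) (γ := γ) π R x, dist_self]
    positivity
  · set c := |γ| * C * β ^ T with hc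
    have hc0 : 0 ≤ c := by positivity
    have hstep := JT_step (γ := γ) hp hβ0 hC hπ hR T hT x
    set g := JT β γ p π R T x with hg
    have hg0 : 0 ≤ g := JT_nonneg hp hπ R T x
    have hgB : g ≤ Real.exp (|γ| * C / (1 - β)) := JT_le_bound hp hβ0 hβ1 hC hπ hR T x
    have hinv : Real.exp (-c) * Real.exp c = 1 := by
      rw [← Real.exp_add]; simp
    have h1 : Real.exp c - 1 ≤ c * Real.exp c := by
      nlinarith [Real.add_one_le_exp (-c), Real.exp_pos c]
    have h2 : 1 - Real.exp (-c) ≤ c := by linarith [Real.add_one_le_exp (-c)]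
    have h3 : c ≤ c * Real.exp c := by
      nlinarith [Real.one_le_exp hc0]
    have hup : JT β γ p π R (T + 1) x - g ≤ g * (c * Real.exp c) := by
      have := hstep.1
      nlinarith [mul_le_mul_of_nonneg_left h1 hg0]
    have hlo : g - JT β γ p π R (T + 1) x ≤ g * (c * Real.exp c) := by
      have := hstep.2
      nlinarith [mul_le_mul_of_nonneg_left h2 hg0, mul_le_mul_of_nonneg_left h3 hg0]
    rw [Real.dist_eq, abs_sub_comm, abs_le]
    constructor
    · have hcc : g * (c * Real.exp c)
          ≤ Real.exp (|γ| * C / (1 - β)) * (|γ| * C * Real.exp (|γ| * C)) * β ^ T := by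
        have hcle : c ≤ |γ| * C := by
          rw [hc]
          nth_rewrite 2 [← mul_one (|γ| * C)]
          exact mul_le_mul_of_nonneg_left (pow_le_one₀ hβ0.le hβ1.le) (by positivity)
        have hece : Real.exp c ≤ Real.exp (|γ| * C) := Real.exp_le_exp.2 hcle
        calc g * (c * Real.exp c)
            ≤ Real.exp (|γ| * C / (1 - β)) * (c * Real.exp c) := by
              apply mul_le_mul_of_nonneg_right hgB (by positivity)
        _ ≤ Real.exp (|γ| * C / (1 - β)) * ((|γ| * C * β ^ T) * Real.exp (|γ| * C)) := by
              apply mul_le_mul_of_nonneg_left _ (Real.exp_pos _).le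
              rw [hc]
              exact mul_le_mul_of_nonneg_left hece (by positivity)
        _ = Real.exp (|γ| * C / (1 - β)) * (|γ| * C * Real.exp (|γ| * C)) * β ^ T := by ring
      linarith
    · have hcc : g * (c * Real.exp c)
          ≤ Real.exp (|γ| * C / (1 - β)) * (|γ| * C * Real.exp (|γ| * C)) * β ^ T := by
        have hcle : c ≤ |γ| * C := by
          rw [hc]
          nth_rewrite 2 [← mul_one (|γ| * C)]
          exact mul_le_mul_of_nonneg_left (pow_le_one₀ hβ0.le hβ1.le) (by positivity)
        have hece : Real.exp c ≤ Real.exp (|γ| * C) := Real.exp_le_exp.2 hcle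
        calc g * (c * Real.exp c)
            ≤ Real.exp (|γ| * C / (1 - β)) * (c * Real.exp c) := by
              apply mul_le_mul_of_nonneg_right hgB (by positivity)
        _ ≤ Real.exp (|γ| * C / (1 - β)) * ((|γ| * C * β ^ T) * Real.exp (|γ| * C)) := by
              apply mul_le_mul_of_nonneg_left _ (Real.exp_pos _).le
              rw [hc]
              exact mul_le_mul_of_nonneg_left hece (by positivity)
        _ = Real.exp (|γ| * C / (1 - β)) * (|γ| * C * Real.exp (|γ| * C)) * β ^ T := by ring
      linarith

lemma tendsto_JT_Jinf (hp : IsTransKer m n p) (hβ0 : 0 < β) (hβ1 : β < 1) (hC : 0 ≤ C)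
    {π : ℕ → Matrix (Fin m) (Fin n) ℝ} (hπ : ∀ t, IsStoch m n (π t))
    {R : Matrix (Fin m) (Fin n) ℝ} (hR : ∀ s a, |R s a| ≤ C) (x : Fin m) :
    Tendsto (fun T => JT β γ p π R T x) atTop (nhds (Jinf β γ p π R x)) := by
  have hcauchy : CauchySeq (fun T => JT β γ p π R T x) :=
    cauchySeq_of_le_geometric β _ hβ1 (fun T => JT_dist_step hp hβ0 hβ1 hC hπ hR T x)
  obtain ⟨L, hL⟩ := cauchySeq_tendsto_of_complete hcauchy
  have : Jinf β γ p π R x = L := hL.limUnder_eq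
  rw [this]
  exact hL

lemma Jinf_le_JT_mul (hp : IsTransKer m n p) (hβ0 : 0 < β) (hβ1 : β < 1) (hC : 0 ≤ C)
    {π : ℕ → Matrix (Fin m) (Fin n) ℝ} (hπ : ∀ t, IsStoch m n (π t))
    {R : Matrix (Fin m) (Fin n) ℝ} (hR : ∀ s a, |R s a| ≤ C) (T : ℕ) (hT : 1 ≤ T) (x : Fin m) :
    Jinf β γ p π R x ≤ JT β γ p π R T x * Real.exp (|γ| * (C / (1 - β)) * β ^ T) := by
  have h1β : 0 < 1 - β := by linarith
  apply le_of_tendsto (tendsto_JT_Jinf hp hβ0 hβ1 hC hπ hR x)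
  filter_upwards [eventually_ge_atTop T] with T' hTT'
  have hchain := (JT_chain (γ := γ) hp hβ0 hC hπ hR T hT x T' hTT').1
  have hSig : |γ| * C * ∑ t ∈ Finset.Ico T T', β ^ t ≤ |γ| * (C / (1 - β)) * β ^ T := by
    have hgeo : ∑ t ∈ Finset.Ico T T', β ^ t = (β ^ T - β ^ T') / (1 - β) := by
      rw [geom_sum_Ico (by intro h; rw [h] at hβ1; linarith : β ≠ 1) hTT']
      rw [div_eq_div_iff (sub_ne_zero.2 (by intro h; rw [h] at hβ1; linarith)) (sub_ne_zero.2 (by intro h; linarith))]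
      ring
    rw [hgeo]
    rw [show |γ| * (C / (1 - β)) * β ^ T = |γ| * C * (β ^ T / (1 - β)) from by ring]
    apply mul_le_mul_of_nonneg_left _ (by positivity)
    rw [div_le_div_iff₀ h1β h1β]
    nlinarith [pow_nonneg hβ0.le T']
  calc JT β γ p π R T' x ≤ JT β γ p π R T x *
        Real.exp (|γ| * C * ∑ t ∈ Finset.Ico T T', β ^ t) := hchain
  _ ≤ JT β γ p π R T x * Real.exp (|γ| * (C / (1 - β)) * β ^ T) :=
      mul_le_mul_of_nonneg_left (Real.exp_le_exp.2 hSig) (JT_nonneg hp hπ R T x)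

end Stmt19Aux
namespace Stmt19Aux

open Finset Filter

variable {m n : ℕ} {p : Fin m → Fin n → Fin m → ℝ} {β γ C : ℝ}

lemma JT_le_Jinf_mul (hp : IsTransKer m n p) (hβ0 : 0 < β) (hβ1 : β < 1) (hC : 0 ≤ C)
    {π : ℕ → Matrix (Fin m) (Fin n) ℝ} (hπ : ∀ t, IsStoch m n (π t))
    {R : Matrix (Fin m) (Fin n) ℝ} (hR : ∀ s a, |R s a| ≤ C) (T : ℕ) (hT : 1 ≤ T) (x : Fin m) :
    JT β γ p π R T x ≤ Jinf β γ p π R x * Real.exp (|γ| * (C / (1 - β)) * β ^ T) := by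
  have h1β : 0 < 1 - β := by linarith
  have hkey : JT β γ p π R T x * Real.exp (-(|γ| * (C / (1 - β)) * β ^ T))
      ≤ Jinf β γ p π R x := by
    apply ge_of_tendsto (tendsto_JT_Jinf hp hβ0 hβ1 hC hπ hR x)
    filter_upwards [eventually_ge_atTop T] with T' hTT'
    have hchain := (JT_chain (γ := γ) hp hβ0 hC hπ hR T hT x T' hTT').2
    have hSig : |γ| * C * ∑ t ∈ Finset.Ico T T', β ^ t ≤ |γ| * (C / (1 - β)) * β ^ T := by
      have hgeo : ∑ t ∈ Finset.Ico T T', β ^ t = (β ^ T - β ^ T') / (1 - β) := by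
        rw [geom_sum_Ico (by intro h; rw [h] at hβ1; linarith : β ≠ 1) hTT']
        rw [div_eq_div_iff (sub_ne_zero.2 (by intro h; rw [h] at hβ1; linarith))
          (sub_ne_zero.2 (by intro h; linarith))]
        ring
      rw [hgeo]
      rw [show |γ| * (C / (1 - β)) * β ^ T = |γ| * C * (β ^ T / (1 - β)) from by ring]
      apply mul_le_mul_of_nonneg_left _ (by positivity)
      rw [div_le_div_iff₀ h1β h1β]
      nlinarith [pow_nonneg hβ0.le T']
    calc JT β γ p π R T x * Real.exp (-(|γ| * (C / (1 - β)) * β ^ T))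
        ≤ JT β γ p π R T x * Real.exp (-(|γ| * C * ∑ t ∈ Finset.Ico T T', β ^ t)) := by
          apply mul_le_mul_of_nonneg_left (Real.exp_le_exp.2 (by linarith))
            (JT_nonneg hp hπ R T x)
    _ ≤ JT β γ p π R T' x := hchain
  have hepos := Real.exp_pos (|γ| * (C / (1 - β)) * β ^ T)
  have := mul_le_mul_of_nonneg_right hkey hepos.le
  rw [mul_assoc, ← Real.exp_add] at this
  simpa using this

lemma tendstoUniformlyOn_JT (hp : IsTransKer m n p) (hβ0 : 0 < β) (hβ1 : β < 1) (hC : 0 ≤ C)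
    {R : Matrix (Fin m) (Fin n) ℝ} (hR : ∀ s a, |R s a| ≤ C) (x : Fin m) :
    TendstoUniformlyOn (fun T (π : ℕ → Matrix (Fin m) (Fin n) ℝ) => JT β γ p π R T x)
      (fun π => Jinf β γ p π R x) atTop (Pol m n) := by
  set D := Real.exp (|γ| * C / (1 - β)) * (|γ| * C * Real.exp (|γ| * C)) with hD
  have hD0 : 0 ≤ D := by positivity
  set h : ℕ → (ℕ → Matrix (Fin m) (Fin n) ℝ) → ℝ :=
    fun t π => JT β γ p π R (t + 1) x - JT β γ p π R t x with hh
  have hbound : ∀ t (π : ℕ → Matrix (Fin m) (Fin n) ℝ), π ∈ Pol m n → ‖h t π‖ ≤ D * β ^ t := by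
    intro t π hπ
    rw [hh]
    simp only [Real.norm_eq_abs]
    rw [abs_sub_comm, ← Real.dist_eq]
    exact JT_dist_step hp hβ0 hβ1 hC hπ hR t x
  have hsumD : Summable (fun t : ℕ => D * β ^ t) :=
    (summable_geometric_of_lt_one hβ0.le hβ1).mul_left D
  have huni := tendstoUniformlyOn_tsum_nat (f := h) hsumD hbound (s := Pol m n)
  have hconst : TendstoUniformlyOn
      (fun (_ : ℕ) (π : ℕ → Matrix (Fin m) (Fin n) ℝ) => JT β γ p π R 0 x)
      (fun π => JT β γ p π R 0 x) atTop (Pol m n) := by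
    intro u hu
    exact Eventually.of_forall fun T π _ => refl_mem_uniformity hu
  have hadd := hconst.add huni
  have hcongr : TendstoUniformlyOn
      (fun T (π : ℕ → Matrix (Fin m) (Fin n) ℝ) => JT β γ p π R T x)
      (fun π => JT β γ p π R 0 x + ∑' t, h t π) atTop (Pol m n) := by
    apply hadd.congr
    apply Eventually.of_forall
    intro T π hπ
    have hts := Finset.sum_range_sub (f := fun t => JT β γ p π R t x) T
    show JT β γ p π R 0 x + ∑ t ∈ Finset.range T, (JT β γ p π R (t + 1) x - JT β γ p π R t x)
        = JT β γ p π R T x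
    rw [hts]
    ring
  apply hcongr.congr_right
  intro π hπ
  have hsummable : Summable (fun t => h t π) :=
    Summable.of_norm_bounded hsumD (fun t => hbound t π hπ)
  have h1 : Tendsto (fun T => JT β γ p π R 0 x + ∑ t ∈ Finset.range T, h t π) atTop
      (nhds (JT β γ p π R 0 x + ∑' t, h t π)) :=
    tendsto_const_nhds.add hsummable.hasSum.tendsto_sum_nat
  have h2 : Tendsto (fun T => JT β γ p π R 0 x + ∑ t ∈ Finset.range T, h t π) atTop
      (nhds (Jinf β γ p π R x)) := by
    have heq : (fun T => JT β γ p π R 0 x + ∑ t ∈ Finset.range T, h t π)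
        = fun T => JT β γ p π R T x := by
      funext T
      have hts := Finset.sum_range_sub (f := fun t => JT β γ p π R t x) T
      show JT β γ p π R 0 x + ∑ t ∈ Finset.range T, (JT β γ p π R (t + 1) x - JT β γ p π R t x)
          = JT β γ p π R T x
      rw [hts]
      ring
    rw [heq]
    exact tendsto_JT_Jinf hp hβ0 hβ1 hC hπ hR x
  exact tendsto_nhds_unique h1 h2

lemma continuousOn_Jinf (hp : IsTransKer m n p) (hβ0 : 0 < β) (hβ1 : β < 1) (hC : 0 ≤ C)
    {R : Matrix (Fin m) (Fin n) ℝ} (hR : ∀ s a, |R s a| ≤ C) (x : Fin m) :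
    ContinuousOn (fun π : ℕ → Matrix (Fin m) (Fin n) ℝ => Jinf β γ p π R x) (Pol m n) :=
  (tendstoUniformlyOn_JT hp hβ0 hβ1 hC hR x).continuousOn
    (Frequently.of_forall fun T => (continuous_JT β γ p R T x).continuousOn)

end Stmt19Aux
namespace Stmt19Aux

open Finset Filter

variable {m n : ℕ} {p : Fin m → Fin n → Fin m → ℝ} {β γ C : ℝ}

lemma exists_min {S : Set (ℕ → Matrix (Fin m) (Fin n) ℝ)} (hsub : S ⊆ Pol m n)
    (hclosed : IsClosed S) (hne : S.Nonempty) {f : (ℕ → Matrix (Fin m) (Fin n) ℝ) → ℝ}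
    (hf : ContinuousOn f (Pol m n)) : ∃ η ∈ S, ∀ π ∈ S, f η ≤ f π := by
  have hcomp : IsCompact S := isCompact_Pol.of_isClosed_subset hclosed hsub
  obtain ⟨η, hη, hmin⟩ := hcomp.exists_isMinOn hne (hf.mono hsub)
  exact ⟨η, hη, fun π hπ => isMinOn_iff.1 hmin π hπ⟩

lemma isClosed_Feas (hp : IsTransKer m n p) (hβ0 : 0 < β) (hβ1 : β < 1) (hC : 0 ≤ C)
    (x : Fin m) {M Mh Mb Mc : ℕ}
    (CC : Fin M → Matrix (Fin m) (Fin n) ℝ) (Ch : Fin Mh → Matrix (Fin m) (Fin n) ℝ)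
    (Cb : Fin Mb → Matrix (Fin m) (Fin n) ℝ) (Cc : Fin Mc → Matrix (Fin m) (Fin n) ℝ)
    (b : Fin M → ℝ) (bh : Fin Mh → ℝ) (bb : Fin Mb → ℝ) (bc : Fin Mc → ℝ)
    (Tb : Fin Mb → ℕ) (Tc : Fin Mc → ℕ)
    (hCC : ∀ i s a, |CC i s a| ≤ C) (hCh : ∀ j s a, |Ch j s a| ≤ C) :
    IsClosed (Feas m n p β γ x CC Ch Cb Cc b bh bb bc Tb Tc) := by
  have heq : Feas m n p β γ x CC Ch Cb Cc b bh bb bc Tb Tc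
      = (Pol m n) ∩
        (⋂ i, Pol m n ∩ (fun π => Vinf β p π (CC i) x) ⁻¹' Set.Iic (b i)) ∩
        (⋂ j, Pol m n ∩ (fun π => Jinf β γ p π (Ch j) x) ⁻¹' Set.Iic (bh j)) ∩
        (⋂ k, (fun π => VT β p π (Cb k) (Tb k) x) ⁻¹' Set.Iic (bb k)) ∩
        (⋂ l, (fun π => JT β γ p π (Cc l) (Tc l) x) ⁻¹' Set.Iic (bc l)) := by
    ext π
    simp only [Feas, Pol, Set.mem_setOf_eq, Set.mem_inter_iff, Set.mem_iInter,
      Set.mem_preimage, Set.mem_Iic]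
    constructor
    · rintro ⟨h1, h2, h3, h4, h5⟩
      exact ⟨⟨⟨⟨h1, fun i => ⟨h1, h2 i⟩⟩, fun j => ⟨h1, h3 j⟩⟩, h4⟩, h5⟩
    · rintro ⟨⟨⟨⟨h1, h2⟩, h3⟩, h4⟩, h5⟩
      exact ⟨h1, fun i => (h2 i).2, fun j => (h3 j).2, h4, h5⟩
  rw [heq]
  apply IsClosed.inter
  apply IsClosed.inter
  apply IsClosed.inter
  apply IsClosed.inter
  · exact isClosed_Pol
  · exact isClosed_iInter fun i =>
      (continuousOn_Vinf hp hβ0.le hβ1 hC (hCC i) x).preimage_isClosed_of_isClosed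
        isClosed_Pol isClosed_Iic
  · exact isClosed_iInter fun j =>
      (continuousOn_Jinf hp hβ0 hβ1 hC (hCh j) x).preimage_isClosed_of_isClosed
        isClosed_Pol isClosed_Iic
  · exact isClosed_iInter fun k =>
      IsClosed.preimage (continuous_VT β p (Cb k) (Tb k) x) isClosed_Iic
  · exact isClosed_iInter fun l =>
      IsClosed.preimage (continuous_JT β γ p (Cc l) (Tc l) x) isClosed_Iic

lemma isClosed_FeasPlus (x : Fin m) {M Mh Mb Mc : ℕ}
    (CC : Fin M → Matrix (Fin m) (Fin n) ℝ) (Ch : Fin Mh → Matrix (Fin m) (Fin n) ℝ)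
    (Cb : Fin Mb → Matrix (Fin m) (Fin n) ℝ) (Cc : Fin Mc → Matrix (Fin m) (Fin n) ℝ)
    (b : Fin M → ℝ) (bh : Fin Mh → ℝ) (bb : Fin Mb → ℝ) (bc : Fin Mc → ℝ)
    (Tb : Fin Mb → ℕ) (Tc : Fin Mc → ℕ) (T : ℕ) :
    IsClosed (FeasPlus m n p β γ C x CC Ch Cb Cc b bh bb bc Tb Tc T) := by
  have heq : FeasPlus m n p β γ C x CC Ch Cb Cc b bh bb bc Tb Tc T
      = (Pol m n) ∩
        (⋂ i, (fun π => VT β p π (CC i) T x) ⁻¹' Set.Iic (b i + C / (1 - β) * β ^ T)) ∩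
        (⋂ j, (fun π => JT β γ p π (Ch j) T x) ⁻¹'
          Set.Iic (bh j * Real.exp (|γ| * (C / (1 - β)) * β ^ T))) ∩
        (⋂ k, (fun π => VT β p π (Cb k) (Tb k) x) ⁻¹' Set.Iic (bb k)) ∩
        (⋂ l, (fun π => JT β γ p π (Cc l) (Tc l) x) ⁻¹' Set.Iic (bc l)) := by
    ext π
    simp only [FeasPlus, Pol, Set.mem_setOf_eq, Set.mem_inter_iff, Set.mem_iInter,
      Set.mem_preimage, Set.mem_Iic]
    tauto
  rw [heq]
  apply IsClosed.inter
  apply IsClosed.inter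
  apply IsClosed.inter
  apply IsClosed.inter
  · exact isClosed_Pol
  · exact isClosed_iInter fun i =>
      IsClosed.preimage (continuous_VT β p (CC i) T x) isClosed_Iic
  · exact isClosed_iInter fun j =>
      IsClosed.preimage (continuous_JT β γ p (Ch j) T x) isClosed_Iic
  · exact isClosed_iInter fun k =>
      IsClosed.preimage (continuous_VT β p (Cb k) (Tb k) x) isClosed_Iic
  · exact isClosed_iInter fun l =>
      IsClosed.preimage (continuous_JT β γ p (Cc l) (Tc l) x) isClosed_Iic

lemma isClosed_FeasMinus (x : Fin m) {M Mh Mb Mc : ℕ}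
    (CC : Fin M → Matrix (Fin m) (Fin n) ℝ) (Ch : Fin Mh → Matrix (Fin m) (Fin n) ℝ)
    (Cb : Fin Mb → Matrix (Fin m) (Fin n) ℝ) (Cc : Fin Mc → Matrix (Fin m) (Fin n) ℝ)
    (b : Fin M → ℝ) (bh : Fin Mh → ℝ) (bb : Fin Mb → ℝ) (bc : Fin Mc → ℝ)
    (Tb : Fin Mb → ℕ) (Tc : Fin Mc → ℕ) (T : ℕ) :
    IsClosed (FeasMinus m n p β γ C x CC Ch Cb Cc b bh bb bc Tb Tc T) := by
  have heq : FeasMinus m n p β γ C x CC Ch Cb Cc b bh bb bc Tb Tc T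
      = (Pol m n) ∩
        (⋂ i, (fun π => VT β p π (CC i) T x) ⁻¹' Set.Iic (b i - C / (1 - β) * β ^ T)) ∩
        (⋂ j, (fun π => JT β γ p π (Ch j) T x) ⁻¹'
          Set.Iic (bh j / Real.exp (|γ| * (C / (1 - β)) * β ^ T))) ∩
        (⋂ k, (fun π => VT β p π (Cb k) (Tb k) x) ⁻¹' Set.Iic (bb k)) ∩
        (⋂ l, (fun π => JT β γ p π (Cc l) (Tc l) x) ⁻¹' Set.Iic (bc l)) := by
    ext π
    simp only [FeasMinus, Pol, Set.mem_setOf_eq, Set.mem_inter_iff, Set.mem_iInter,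
      Set.mem_preimage, Set.mem_Iic]
    tauto
  rw [heq]
  apply IsClosed.inter
  apply IsClosed.inter
  apply IsClosed.inter
  apply IsClosed.inter
  · exact isClosed_Pol
  · exact isClosed_iInter fun i =>
      IsClosed.preimage (continuous_VT β p (CC i) T x) isClosed_Iic
  · exact isClosed_iInter fun j =>
      IsClosed.preimage (continuous_JT β γ p (Ch j) T x) isClosed_Iic
  · exact isClosed_iInter fun k =>
      IsClosed.preimage (continuous_VT β p (Cb k) (Tb k) x) isClosed_Iic
  · exact isClosed_iInter fun l =>
      IsClosed.preimage (continuous_JT β γ p (Cc l) (Tc l) x) isClosed_Iic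

end Stmt19Aux
namespace Stmt19Aux

open Finset Filter

variable {m n : ℕ} {p : Fin m → Fin n → Fin m → ℝ} {β γ C : ℝ}

lemma mem_FeasPlus_of_mem_Feas (hp : IsTransKer m n p) (hβ0 : 0 < β) (hβ1 : β < 1)
    (hC : 0 ≤ C) (x : Fin m) {M Mh Mb Mc : ℕ}
    {CC : Fin M → Matrix (Fin m) (Fin n) ℝ} {Ch : Fin Mh → Matrix (Fin m) (Fin n) ℝ}
    {Cb : Fin Mb → Matrix (Fin m) (Fin n) ℝ} {Cc : Fin Mc → Matrix (Fin m) (Fin n) ℝ}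
    {b : Fin M → ℝ} {bh : Fin Mh → ℝ} {bb : Fin Mb → ℝ} {bc : Fin Mc → ℝ}
    {Tb : Fin Mb → ℕ} {Tc : Fin Mc → ℕ}
    (hCC : ∀ i s a, |CC i s a| ≤ C) (hCh : ∀ j s a, |Ch j s a| ≤ C)
    (T : ℕ) (hT : 1 ≤ T) {π : ℕ → Matrix (Fin m) (Fin n) ℝ}
    (hmem : π ∈ Feas m n p β γ x CC Ch Cb Cc b bh bb bc Tb Tc) :
    π ∈ FeasPlus m n p β γ C x CC Ch Cb Cc b bh bb bc Tb Tc T := by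
  obtain ⟨hπ, hV, hJ, hVb, hJc⟩ := hmem
  refine ⟨hπ, ?_, ?_, hVb, hJc⟩
  · intro i
    have habs := Vinf_sub_VT_abs_le hp hβ0.le hβ1 hC hπ (hCC i) T x
    have := abs_le.1 habs
    linarith [hV i, this.1]
  · intro j
    calc JT β γ p π (Ch j) T x
        ≤ Jinf β γ p π (Ch j) x * Real.exp (|γ| * (C / (1 - β)) * β ^ T) :=
          JT_le_Jinf_mul hp hβ0 hβ1 hC hπ (hCh j) T hT x
    _ ≤ bh j * Real.exp (|γ| * (C / (1 - β)) * β ^ T) :=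
          mul_le_mul_of_nonneg_right (hJ j) (Real.exp_pos _).le

lemma mem_Feas_of_mem_FeasMinus (hp : IsTransKer m n p) (hβ0 : 0 < β) (hβ1 : β < 1)
    (hC : 0 ≤ C) (x : Fin m) {M Mh Mb Mc : ℕ}
    {CC : Fin M → Matrix (Fin m) (Fin n) ℝ} {Ch : Fin Mh → Matrix (Fin m) (Fin n) ℝ}
    {Cb : Fin Mb → Matrix (Fin m) (Fin n) ℝ} {Cc : Fin Mc → Matrix (Fin m) (Fin n) ℝ}
    {b : Fin M → ℝ} {bh : Fin Mh → ℝ} {bb : Fin Mb → ℝ} {bc : Fin Mc → ℝ}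
    {Tb : Fin Mb → ℕ} {Tc : Fin Mc → ℕ}
    (hCC : ∀ i s a, |CC i s a| ≤ C) (hCh : ∀ j s a, |Ch j s a| ≤ C)
    (T : ℕ) (hT : 1 ≤ T) {π : ℕ → Matrix (Fin m) (Fin n) ℝ}
    (hmem : π ∈ FeasMinus m n p β γ C x CC Ch Cb Cc b bh bb bc Tb Tc T) :
    π ∈ Feas m n p β γ x CC Ch Cb Cc b bh bb bc Tb Tc := by
  obtain ⟨hπ, hV, hJ, hVb, hJc⟩ := hmem
  refine ⟨hπ, ?_, ?_, hVb, hJc⟩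
  · intro i
    have habs := Vinf_sub_VT_abs_le hp hβ0.le hβ1 hC hπ (hCC i) T x
    have := abs_le.1 habs
    linarith [hV i, this.2]
  · intro j
    have hE := Real.exp_pos (|γ| * (C / (1 - β)) * β ^ T)
    calc Jinf β γ p π (Ch j) x
        ≤ JT β γ p π (Ch j) T x * Real.exp (|γ| * (C / (1 - β)) * β ^ T) :=
          Jinf_le_JT_mul hp hβ0 hβ1 hC hπ (hCh j) T hT x
    _ ≤ (bh j / Real.exp (|γ| * (C / (1 - β)) * β ^ T)) *
          Real.exp (|γ| * (C / (1 - β)) * β ^ T) :=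
          mul_le_mul_of_nonneg_right (hJ j) hE.le
    _ = bh j := div_mul_cancel₀ _ (Real.exp_ne_zero _)

lemma mem_FeasMinus_mono (hp : IsTransKer m n p) (hβ0 : 0 < β) (hβ1 : β < 1)
    (hC : 0 ≤ C) (x : Fin m) {M Mh Mb Mc : ℕ}
    {CC : Fin M → Matrix (Fin m) (Fin n) ℝ} {Ch : Fin Mh → Matrix (Fin m) (Fin n) ℝ}
    {Cb : Fin Mb → Matrix (Fin m) (Fin n) ℝ} {Cc : Fin Mc → Matrix (Fin m) (Fin n) ℝ}
    {b : Fin M → ℝ} {bh : Fin Mh → ℝ} {bb : Fin Mb → ℝ} {bc : Fin Mc → ℝ}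
    {Tb : Fin Mb → ℕ} {Tc : Fin Mc → ℕ}
    (hCC : ∀ i s a, |CC i s a| ≤ C) (hCh : ∀ j s a, |Ch j s a| ≤ C)
    (Tstar T : ℕ) (hTstar : 1 ≤ Tstar) (hTT : Tstar ≤ T)
    {π : ℕ → Matrix (Fin m) (Fin n) ℝ}
    (hmem : π ∈ FeasMinus m n p β γ C x CC Ch Cb Cc b bh bb bc Tb Tc Tstar) :
    π ∈ FeasMinus m n p β γ C x CC Ch Cb Cc b bh bb bc Tb Tc T := by
  have h1β : 0 < 1 - β := by linarith
  have hβne : β ≠ 1 := by intro h; rw [h] at hβ1; linarith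
  have hgeo : ∑ t ∈ Finset.Ico Tstar T, β ^ t = (β ^ Tstar - β ^ T) / (1 - β) := by
    rw [geom_sum_Ico hβne hTT]
    rw [div_eq_div_iff (sub_ne_zero.2 hβne) (sub_ne_zero.2 (by intro h; linarith))]
    ring
  obtain ⟨hπ, hV, hJ, hVb, hJc⟩ := hmem
  refine ⟨hπ, ?_, ?_, hVb, hJc⟩
  · intro i
    have hsplit : VT β p π (CC i) T x = VT β p π (CC i) Tstar x +
        ∑ t ∈ Finset.Ico Tstar T, β ^ t * (Ppi p π t *ᵥ Rvec (CC i) (π t)) x := by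
      simp only [VT]
      rw [Finset.sum_range_add_sum_Ico _ hTT]
    have htail : ∑ t ∈ Finset.Ico Tstar T, β ^ t * (Ppi p π t *ᵥ Rvec (CC i) (π t)) x
        ≤ C * ((β ^ Tstar - β ^ T) / (1 - β)) := by
      calc ∑ t ∈ Finset.Ico Tstar T, β ^ t * (Ppi p π t *ᵥ Rvec (CC i) (π t)) x
          ≤ ∑ t ∈ Finset.Ico Tstar T, C * β ^ t := by
            apply Finset.sum_le_sum
            intro t _
            have := abs_le.1 (VT_term_abs_le hp hβ0.le hC hπ (hCC i) t x)
            linarith [this.2]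
      _ = C * ((β ^ Tstar - β ^ T) / (1 - β)) := by rw [← Finset.mul_sum, hgeo]
    have harith : b i - C / (1 - β) * β ^ Tstar + C * ((β ^ Tstar - β ^ T) / (1 - β))
        = b i - C / (1 - β) * β ^ T := by
      field_simp
      ring
    rw [hsplit]
    linarith [hV i]
  · intro j
    have hchain := (JT_chain (γ := γ) hp hβ0 hC hπ (hCh j) Tstar hTstar x T hTT).1
    have hEexp : Real.exp (|γ| * (C / (1 - β)) * β ^ Tstar)
        = Real.exp (|γ| * (C / (1 - β)) * β ^ T) *
          Real.exp (|γ| * C * ∑ t ∈ Finset.Ico Tstar T, β ^ t) := by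
      rw [← Real.exp_add, hgeo]
      congr 1
      field_simp
      ring
    calc JT β γ p π (Ch j) T x
        ≤ JT β γ p π (Ch j) Tstar x *
          Real.exp (|γ| * C * ∑ t ∈ Finset.Ico Tstar T, β ^ t) := hchain
    _ ≤ (bh j / Real.exp (|γ| * (C / (1 - β)) * β ^ Tstar)) *
          Real.exp (|γ| * C * ∑ t ∈ Finset.Ico Tstar T, β ^ t) :=
          mul_le_mul_of_nonneg_right (hJ j) (Real.exp_pos _).le
    _ = bh j / Real.exp (|γ| * (C / (1 - β)) * β ^ T) := by
          rw [hEexp, div_mul_eq_mul_div,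
            mul_comm (Real.exp (|γ| * (C / (1 - β)) * β ^ T))
              (Real.exp (|γ| * C * ∑ t ∈ Finset.Ico Tstar T, β ^ t)),
            mul_comm (bh j) (Real.exp (|γ| * C * ∑ t ∈ Finset.Ico Tstar T, β ^ t)),
            mul_div_mul_left _ _ (Real.exp_ne_zero _)]

end Stmt19Aux
/-- existence of optimal solutions for `(P)`, `(P_T^+)` and `(P_T^-)`. -/
theorem stmt_19 (m n : ℕ) (hm : 1 ≤ m) (hn : 1 ≤ n)
    (p : Fin m → Fin n → Fin m → ℝ) (hp : IsTransKer m n p)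
    (β : ℝ) (hβ0 : 0 < β) (hβ1 : β < 1)
    (γ : ℝ) (hγ : γ ≠ 0)
    (C : ℝ) (hC : 0 < C)
    (x : Fin m)
    (M Mh Mb Mc : ℕ) (hM : M + Mh + Mb + Mc ≠ 0)
    (CC : Fin M → Matrix (Fin m) (Fin n) ℝ) (Ch : Fin Mh → Matrix (Fin m) (Fin n) ℝ)
    (Cb : Fin Mb → Matrix (Fin m) (Fin n) ℝ) (Cc : Fin Mc → Matrix (Fin m) (Fin n) ℝ)
    (R : Matrix (Fin m) (Fin n) ℝ)
    (hCC : ∀ i s a, |CC i s a| ≤ C) (hCh : ∀ j s a, |Ch j s a| ≤ C)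
    (hCb : ∀ k s a, |Cb k s a| ≤ C) (hCc : ∀ l s a, |Cc l s a| ≤ C)
    (hR : ∀ s a, |R s a| ≤ C)
    (b : Fin M → ℝ) (bh : Fin Mh → ℝ) (bb : Fin Mb → ℝ) (bc : Fin Mc → ℝ)
    (Tb : Fin Mb → ℕ) (hTb : ∀ k, 1 ≤ Tb k) (Tc : Fin Mc → ℕ) (hTc : ∀ l, 1 ≤ Tc l) :
    -- the infinite-horizon risk-sensitive costs appearing below exist as limits
    (∀ π : ℕ → Matrix (Fin m) (Fin n) ℝ, (∀ t, IsStoch m n (π t)) →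
      Filter.Tendsto (fun T => JT β γ p π R T x) Filter.atTop (nhds (Jinf β γ p π R x)) ∧
      ∀ j, Filter.Tendsto (fun T => JT β γ p π (Ch j) T x) Filter.atTop
        (nhds (Jinf β γ p π (Ch j) x))) ∧
    -- (a) if F is nonempty, (P) and every (P_T^+) with T ≥ 1 have solutions
    ((Feas m n p β γ x CC Ch Cb Cc b bh bb bc Tb Tc).Nonempty →
      (∃ η ∈ Feas m n p β γ x CC Ch Cb Cc b bh bb bc Tb Tc,
        ∀ π ∈ Feas m n p β γ x CC Ch Cb Cc b bh bb bc Tb Tc,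
          Jinf β γ p η R x ≤ Jinf β γ p π R x) ∧
      ∀ T : ℕ, 1 ≤ T →
        ∃ η ∈ FeasPlus m n p β γ C x CC Ch Cb Cc b bh bb bc Tb Tc T,
          ∀ π ∈ FeasPlus m n p β γ C x CC Ch Cb Cc b bh bb bc Tb Tc T,
            JT β γ p η R T x ≤ JT β γ p π R T x) ∧
    -- (b) if F_{T*}^- is nonempty for some T* ≥ 1, then F is nonempty and (P_T^-) has a
    -- solution for every T ≥ T*
    ∀ Tstar : ℕ, 1 ≤ Tstar →
      (FeasMinus m n p β γ C x CC Ch Cb Cc b bh bb bc Tb Tc Tstar).Nonempty →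
      (Feas m n p β γ x CC Ch Cb Cc b bh bb bc Tb Tc).Nonempty ∧
      ∀ T : ℕ, Tstar ≤ T →
        ∃ η ∈ FeasMinus m n p β γ C x CC Ch Cb Cc b bh bb bc Tb Tc T,
          ∀ π ∈ FeasMinus m n p β γ C x CC Ch Cb Cc b bh bb bc Tb Tc T,
            JT β γ p η R T x ≤ JT β γ p π R T x := by
  classical
  have hβ0' : (0:ℝ) ≤ β := hβ0.le
  have hC' : (0:ℝ) ≤ C := hC.le
  refine ⟨?_, ?_, ?_⟩
  · -- limits exist
    intro π hπ
    exact ⟨Stmt19Aux.tendsto_JT_Jinf hp hβ0 hβ1 hC' hπ hR x,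
      fun j => Stmt19Aux.tendsto_JT_Jinf hp hβ0 hβ1 hC' hπ (hCh j) x⟩
  · -- part (a)
    intro hF
    constructor
    · exact Stmt19Aux.exists_min (fun π hπ => hπ.1)
        (Stmt19Aux.isClosed_Feas hp hβ0 hβ1 hC' x CC Ch Cb Cc b bh bb bc Tb Tc hCC hCh)
        hF (Stmt19Aux.continuousOn_Jinf hp hβ0 hβ1 hC' hR x)
    · intro T hT
      obtain ⟨σ, hσ⟩ := hF
      exact Stmt19Aux.exists_min (fun π hπ => hπ.1)
        (Stmt19Aux.isClosed_FeasPlus x CC Ch Cb Cc b bh bb bc Tb Tc T)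
        ⟨σ, Stmt19Aux.mem_FeasPlus_of_mem_Feas hp hβ0 hβ1 hC' x hCC hCh T hT hσ⟩
        (Stmt19Aux.continuous_JT β γ p R T x).continuousOn
  · -- part (b)
    intro Tstar hTstar hFm
    obtain ⟨σ, hσ⟩ := hFm
    constructor
    · exact ⟨σ, Stmt19Aux.mem_Feas_of_mem_FeasMinus hp hβ0 hβ1 hC' x hCC hCh Tstar hTstar hσ⟩
    · intro T hTT
      exact Stmt19Aux.exists_min (fun π hπ => hπ.1)
        (Stmt19Aux.isClosed_FeasMinus x CC Ch Cb Cc b bh bb bc Tb Tc T)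
        ⟨σ, Stmt19Aux.mem_FeasMinus_mono hp hβ0 hβ1 hC' x hCC hCh Tstar T hTstar hTT hσ⟩
        (Stmt19Aux.continuous_JT β γ p R T x).continuousOn

end Statement19
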